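/- Let p = vecr(b_1, …, b_r) ∈ F^{r(Σ+d)} with b_i = (a_i^{(1)}, …, a_i^{(d)}), and suppose Terracini's matrix T_p has rank r(Σ+1). Then the r(d−1) vectors k_i^{(k)} ⊗ e_i (2 ≤ k ≤ d, 1 ≤ i ≤ r), where e_i is the i-th standard basis vector of F^r, form a basis of the kernel of T_p; in particular dim ker T_p = r(d−1). -/

import Mathlib

open scoped BigOperators
open scoped Matrix

noncomputable section

namespace TensorCond

variable {𝕜 : Type*} [RCLike 𝕜]
variable {d r : ℕ} {n : Fin d → ℕ}

/-- The space `F^{r(Σ+d)}` of vectorized factor matrices: `r` blocks,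
each consisting of `d` factors `a_i^{(k)} ∈ F^{n_k}`. -/
abbrev Vecr (𝕜 : Type*) (d r : ℕ) (n : Fin d → ℕ) : Type _ :=
  Fin r → (k : Fin d) → Fin (n k) → 𝕜

/-- The tensor space `F^{n₁} ⊗ ⋯ ⊗ F^{n_d} ≅ F^Π`. -/
abbrev Tensor (𝕜 : Type*) (d : ℕ) (n : Fin d → ℕ) : Type _ :=
  ((k : Fin d) → Fin (n k)) → 𝕜

/-- Column index of Terracini's matrix. -/
abbrev ColIdx (d r : ℕ) (n : Fin d → ℕ) : Type _ :=
  Fin r × Σ k : Fin d, Fin (n k)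

/-- The tensor computation map `f`. -/
def tmap (p : Vecr 𝕜 d r n) : Tensor 𝕜 d n :=
  fun x => ∑ i, ∏ k, p i k (x k)

/-- Terracini's matrix `T_p`. -/
def terracini (p : Vecr 𝕜 d r n) :
    Matrix ((k : Fin d) → Fin (n k)) (ColIdx d r n) 𝕜 :=
  Matrix.of fun x q =>
    (if x q.2.1 = q.2.2 then (1 : 𝕜) else 0) *
      ∏ l ∈ Finset.univ.erase q.2.1, p q.1 l (x l)

/-- Flattening of a representative vector. -/
def flat (p : Vecr 𝕜 d r n) : ColIdx d r n → 𝕜 :=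
  fun q => p q.1 q.2.1 q.2.2

/-- Flattening as a linear map. -/
def flatLM (𝕜 : Type*) [RCLike 𝕜] (d r : ℕ) (n : Fin d → ℕ) :
    Vecr 𝕜 d r n →ₗ[𝕜] (ColIdx d r n → 𝕜) where
  toFun := flat
  map_add' _ _ := rfl
  map_smul' _ _ := rfl

/-- Euclidean norm of a finitely supported vector. -/
def eunorm {ι : Type*} [Fintype ι] (v : ι → 𝕜) : ℝ :=
  Real.sqrt (∑ i, ‖v i‖ ^ 2)

/-- Euclidean norm of one block. -/
def bnorm (b : (k : Fin d) → Fin (n k) → 𝕜) : ℝ :=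
  Real.sqrt (∑ k, ∑ j, ‖b k j‖ ^ 2)

/-- Euclidean norm on `F^{r(Σ+d)}`. -/
def vnorm (p : Vecr 𝕜 d r n) : ℝ :=
  Real.sqrt (∑ i, ∑ k, ∑ j, ‖p i k j‖ ^ 2)

/-- Euclidean (Frobenius) norm on the tensor space. -/
def tnorm (A : Tensor 𝕜 d n) : ℝ :=
  Real.sqrt (∑ x, ‖A x‖ ^ 2)

/-- Scaling part of the group `𝒯`. -/
def IsScaling (s : Fin r → Fin d → 𝕜) : Prop :=
  (∀ i k, s i k ≠ 0) ∧ ∀ i, ∏ k, s i k = 1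

/-- Action of an element of `𝒯`. -/
def act (π : Equiv.Perm (Fin r)) (s : Fin r → Fin d → 𝕜) (q : Vecr 𝕜 d r n) :
    Vecr 𝕜 d r n :=
  fun i k j => s i k * q (π i) k j

/-- `p ∼ q`. -/
def rel (p q : Vecr 𝕜 d r n) : Prop :=
  ∃ (π : Equiv.Perm (Fin r)) (s : Fin r → Fin d → 𝕜), IsScaling s ∧ p = act π s q

/-- The distance measure `d(p,q) = inf_{T ∈ 𝒯} ‖p − Tq‖`. -/
def gdist (p q : Vecr 𝕜 d r n) : ℝ :=
  sInf { x | ∃ (π : Equiv.Perm (Fin r)) (s : Fin r → Fin d → 𝕜),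
    IsScaling s ∧ x = vnorm (p - act π s q) }

/-- Tensors of rank at most `r`. -/
def SecZ (𝕜 : Type*) [RCLike 𝕜] (d r : ℕ) (n : Fin d → ℕ) : Set (Tensor 𝕜 d n) :=
  Set.range (tmap (𝕜 := 𝕜) (d := d) (r := r) (n := n))

/-- `r`-identifiability. -/
def Identifiable {𝕜 : Type*} [RCLike 𝕜] {d : ℕ} {n : Fin d → ℕ} (r : ℕ)
    (A : Tensor 𝕜 d n) : Prop :=
  ∀ x y : Vecr 𝕜 d r n, tmap x = A → tmap y = A → rel x y

/-- `d(p, f†(A))`. -/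
def fdist (p : Vecr 𝕜 d r n) (A : Tensor 𝕜 d n) : ℝ :=
  sInf { x | ∃ q : Vecr 𝕜 d r n, tmap q = A ∧ x = gdist p q }

/-- Multiset of singular values of a matrix. -/
def singularValues {m l : Type*} [Fintype m] [Fintype l] [DecidableEq l]
    (M : Matrix m l 𝕜) : Multiset ℝ :=
  Multiset.map
    (fun i => Real.sqrt ((Matrix.isHermitian_conjTranspose_mul_self M).eigenvalues i))
    Finset.univ.val

/-- `j`-th largest singular value (1-indexed). -/
def nthSV {m l : Type*} [Fintype m] [Fintype l] [DecidableEq l]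
    (M : Matrix m l 𝕜) (j : ℕ) : ℝ :=
  (((singularValues M).sort (· ≤ ·)).reverse).getD (j - 1) 0

/-- Spectral norm. -/
def specNorm {m l : Type*} [Fintype m] [Fintype l] (M : Matrix m l 𝕜) : ℝ :=
  sSup { x | ∃ v : l → 𝕜, eunorm v = 1 ∧ x = eunorm (M.mulVec v) }

/-- Kernel vector `k_i^{(k)}` (one block). -/
def kvec [NeZero d] (p : Vecr 𝕜 d r n) (i : Fin r) (k : Fin d) :
    (l : Fin d) → Fin (n l) → 𝕜 :=
  fun l j =>
    if h0 : l = 0 then p i 0 (h0 ▸ j)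
    else if hk : l = k then -(p i k (hk ▸ j)) else 0

/-- Kernel basis vector `k_i^{(k)} ⊗ e_i` as a flattened column vector. -/
def kcol [NeZero d] (p : Vecr 𝕜 d r n) (i : Fin r) (k : Fin d) :
    ColIdx d r n → 𝕜 :=
  fun q => if q.1 = i then kvec p i k q.2.1 q.2.2 else 0

/-- `P ⊗ I_{Σ+d}` for a permutation `π`. -/
def permMx (𝕜 : Type*) [RCLike 𝕜] (d r : ℕ) (n : Fin d → ℕ)
    (π : Equiv.Perm (Fin r)) : Matrix (ColIdx d r n) (ColIdx d r n) 𝕜 :=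
  Matrix.of fun x y => if y.1 = π x.1 ∧ x.2 = y.2 then 1 else 0

/-- Block diagonal scaling matrix `diag(D_1, …, D_r)`. -/
def scalMx (s : Fin r → Fin d → 𝕜) : Matrix (ColIdx d r n) (ColIdx d r n) 𝕜 :=
  Matrix.diagonal fun x => s x.1 x.2.1

/-- The set `𝒯 = 𝒫ℬ` of matrices. -/
def Tset (𝕜 : Type*) [RCLike 𝕜] (d r : ℕ) (n : Fin d → ℕ) :
    Set (Matrix (ColIdx d r n) (ColIdx d r n) 𝕜) :=
  { M | ∃ (π : Equiv.Perm (Fin r)) (s : Fin r → Fin d → 𝕜),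
      IsScaling s ∧ M = permMx 𝕜 d r n π * scalMx s }

/-- The `i`-th block `T_i` of Terracini's matrix. -/
def terraciniBlock (p : Vecr 𝕜 d r n) (i : Fin r) :
    Matrix ((k : Fin d) → Fin (n k)) (Σ k : Fin d, Fin (n k)) 𝕜 :=
  Matrix.of fun x q =>
    (if x q.1 = q.2 then (1 : 𝕜) else 0) * ∏ l ∈ Finset.univ.erase q.1, p i l (x l)

/-- Kernel-basis matrix `K = [k^{(2)} ⋯ k^{(d)}]` (single point, r = 1). -/
def Kmx [NeZero d] (a : (k : Fin d) → Fin (n k) → 𝕜) :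
    Matrix (Σ k : Fin d, Fin (n k)) {k : Fin d // k ≠ 0} 𝕜 :=
  Matrix.of fun q j => kvec (fun _ : Fin 1 => a) 0 j.1 q.1 q.2

/-! ### Auxiliary lemmas for Statement 8 -/

/-- Diagonal criterion for linear independence of a finite family of functions. -/
lemma li_of_diag {ι X : Type*} [Fintype ι] [Fintype X] (v : ι → X → 𝕜) (c : ι → X)
    (hdiag : ∀ q, v q (c q) ≠ 0) (hoff : ∀ q q', q' ≠ q → v q' (c q) = 0) :
    LinearIndependent 𝕜 v := by
  rw [Fintype.linearIndependent_iff]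
  intro g hg q
  have h := congrFun hg (c q)
  simp only [Finset.sum_apply, Pi.smul_apply, smul_eq_mul, Pi.zero_apply] at h
  rw [Finset.sum_eq_single q (fun q' _ hne => by rw [hoff q q' hne, mul_zero])
    (fun hq => absurd (Finset.mem_univ q) hq)] at h
  exact (mul_eq_zero.mp h).resolve_right (hdiag q)

lemma kvec_fst [NeZero d] (p : Vecr 𝕜 d r n) (i : Fin r) (k : Fin d)
    (j : Fin (n 0)) : kvec p i k 0 j = p i 0 j := by simp [kvec]

lemma kvec_self [NeZero d] (p : Vecr 𝕜 d r n) (i : Fin r) {k : Fin d} (hk : k ≠ 0)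
    (j : Fin (n k)) : kvec p i k k j = -p i k j := by simp [kvec, hk]

lemma kvec_other [NeZero d] (p : Vecr 𝕜 d r n) (i : Fin r) (k : Fin d) {m : Fin d}
    (h0 : m ≠ 0) (hk : m ≠ k) (j : Fin (n m)) : kvec p i k m j = 0 := by
  simp [kvec, h0, hk]

/-- The kernel vectors `k_i^{(k)} ⊗ e_i` with `k ≠ 0` lie in the kernel of `T_p`. -/
lemma kcol_mem_ker [NeZero d] (p : Vecr 𝕜 d r n) (i : Fin r) {k : Fin d} (hk : k ≠ 0) :
    (terracini p).mulVec (kcol p i k) = 0 := by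
  classical
  funext x
  show ∑ q : ColIdx d r n, terracini p x q * kcol p i k q = 0
  rw [Fintype.sum_prod_type]
  rw [Finset.sum_eq_single i (fun i' _ hne => Finset.sum_eq_zero fun σ _ => by
        simp [kcol, hne])
      (fun hi => absurd (Finset.mem_univ i) hi)]
  have hterm : ∀ σ : Σ m, Fin (n m), terracini p x (i, σ) * kcol p i k (i, σ)
      = (if x σ.1 = σ.2 then (1 : 𝕜) else 0) *
          ((∏ l ∈ Finset.univ.erase σ.1, p i l (x l)) * kvec p i k σ.1 σ.2) := by
    intro σ
    simp [terracini, kcol, mul_assoc]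
  simp only [hterm]
  rw [← Finset.univ_sigma_univ, Finset.sum_sigma]
  have hinner : ∀ m : Fin d, (∑ j : Fin (n m), (if x m = j then (1 : 𝕜) else 0) *
      ((∏ l ∈ Finset.univ.erase m, p i l (x l)) * kvec p i k m j))
      = (∏ l ∈ Finset.univ.erase m, p i l (x l)) * kvec p i k m (x m) := by
    intro m
    simp only [ite_mul, one_mul, zero_mul]
    rw [Finset.sum_ite_eq Finset.univ (x m)
      (fun j => (∏ l ∈ Finset.univ.erase m, p i l (x l)) * kvec p i k m j)]
    simp
  simp only [hinner]
  rw [← Finset.add_sum_erase _ _ (Finset.mem_univ (0 : Fin d)),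
    ← Finset.add_sum_erase _ _ (Finset.mem_erase.mpr ⟨hk, Finset.mem_univ k⟩)]
  rw [Finset.sum_eq_zero (fun m hm => by
    have h1 := Finset.mem_erase.mp hm
    have h2 := Finset.mem_erase.mp h1.2
    rw [kvec_other p i k h2.1 h1.1, mul_zero])]
  rw [kvec_fst, kvec_self p i hk, mul_neg, add_zero,
    Finset.prod_erase_mul _ _ (Finset.mem_univ (0 : Fin d)),
    Finset.prod_erase_mul _ _ (Finset.mem_univ k), add_neg_cancel]

/-- If some factor of block `i` vanishes, every standard basis vector in a
different mode of block `i` lies in the kernel of `T_p`. -/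
lemma single_mem_ker [NeZero d] (p : Vecr 𝕜 d r n) {i : Fin r} {l : Fin d}
    (hl : p i l = 0) {m : Fin d} (hm : m ≠ l) (j : Fin (n m)) :
    (terracini p).mulVec (Pi.single ((i, ⟨m, j⟩) : ColIdx d r n) 1) = 0 := by
  classical
  funext x
  rw [Matrix.mulVec_single]
  have : (∏ l' ∈ Finset.univ.erase m, p i l' (x l')) = 0 :=
    Finset.prod_eq_zero (Finset.mem_erase.mpr ⟨Ne.symm hm, Finset.mem_univ l⟩)
      (congrFun hl (x l))
  simp [terracini, this]

/-- Cardinality of the index set for the kernel basis. -/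
lemma card_nz [NeZero d] :
    Fintype.card {q : Fin r × Fin d // q.2 ≠ 0} = r * (d - 1) := by
  classical
  have e : {q : Fin r × Fin d // q.2 ≠ 0} ≃ Fin r × {k : Fin d // k ≠ 0} :=
    { toFun := fun q => (q.1.1, ⟨q.1.2, q.2⟩)
      invFun := fun x => ⟨(x.1, x.2.1), x.2.2⟩
      left_inv := fun q => rfl
      right_inv := fun x => rfl }
  rw [Fintype.card_congr e, Fintype.card_prod, Fintype.card_fin]
  congr 1
  rw [Fintype.card_subtype_compl, Fintype.card_subtype_eq, Fintype.card_fin]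

/-- Sum identity `∑ n_k = ∑ (n_k − 1) + d`. -/
lemma sum_split (hn : ∀ k, 2 ≤ n k) : ∑ k, n k = (∑ k, (n k - 1)) + d := by
  calc ∑ k, n k = ∑ k, ((n k - 1) + 1) :=
        Finset.sum_congr rfl (fun k _ => by have := hn k; omega)
    _ = (∑ k, (n k - 1)) + d := by
        rw [Finset.sum_add_distrib, Finset.sum_const, Finset.card_univ,
          Fintype.card_fin, smul_eq_mul, mul_one]

/-- Rank–nullity for Terracini's matrix. -/
lemma ker_finrank_eq [NeZero d] (hd : 2 ≤ d) (hn : ∀ k, 2 ≤ n k) (p : Vecr 𝕜 d r n)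
    (hrank : (terracini p).rank = r * ((∑ k, (n k - 1)) + 1)) :
    Module.finrank 𝕜 (LinearMap.ker (terracini p).mulVecLin) = r * (d - 1) := by
  classical
  have h := LinearMap.finrank_range_add_finrank_ker (terracini p).mulVecLin
  have hdom : Module.finrank 𝕜 (ColIdx d r n → 𝕜) = r * ∑ k, n k := by
    rw [Module.finrank_pi]
    simp [Fintype.card_sigma]
  have hrange : Module.finrank 𝕜 (LinearMap.range (terracini p).mulVecLin)
      = r * ((∑ k, (n k - 1)) + 1) := hrank
  rw [hdom, hrange, sum_split hn] at h
  have hexp : r * ((∑ k, (n k - 1)) + d)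
      = r * ((∑ k, (n k - 1)) + 1) + r * (d - 1) := by
    rw [← Nat.mul_add]
    congr 1
    omega
  rw [hexp] at h
  exact Nat.add_left_cancel h

/-- A component-wise criterion for inequality of column indices. -/
lemma colidx_ne {A B : ColIdx d r n}
    (h : A.1 ≠ B.1 ∨ A.2.1 ≠ B.2.1 ∨ (A.2.2 : ℕ) ≠ (B.2.2 : ℕ)) : A ≠ B := by
  intro he
  subst he
  simp at h

/-- The rank hypothesis forces all factors `a_i^{(k)}`, `k ≠ 0`, to be nonzero. -/
lemma nz_of_rank [NeZero d] (hd : 2 ≤ d) (hn : ∀ k, 2 ≤ n k) (p : Vecr 𝕜 d r n)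
    (hrank : (terracini p).rank = r * ((∑ k, (n k - 1)) + 1))
    (i : Fin r) (k : Fin d) (hk : k ≠ 0) : p i k ≠ 0 := by
  classical
  intro hzero
  -- auxiliary data
  let z : ∀ m : Fin d, Fin (n m) := fun m => ⟨0, by have := hn m; omega⟩
  let o : ∀ m : Fin d, Fin (n m) := fun m => ⟨1, by have := hn m; omega⟩
  let kbar : Fin d := ⟨1, by omega⟩
  have hkbar : kbar ≠ 0 := by simp [kbar, Fin.ext_iff]
  let Bad : Fin r → Prop := fun i' => ∃ l, p i' l = 0
  have hBadi : Bad i := ⟨k, hzero⟩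
  let L : Fin r → Fin d := fun i' => if h : Bad i' then h.choose else 0
  have hL : ∀ i', Bad i' → p i' (L i') = 0 := by
    intro i' h
    have hLh : L i' = h.choose := dif_pos h
    rw [hLh]
    exact h.choose_spec
  have hswap : ∀ (l k' : Fin d), k' ≠ 0 → Equiv.swap 0 l k' ≠ l := by
    intro l k' h0 h
    exact h0 ((Equiv.swap 0 l).injective (h.trans (Equiv.swap_apply_left 0 l).symm))
  -- the family
  let ι : Type _ := {q : Fin r × Fin d // q.2 ≠ 0} ⊕ Unit
  let v : ι → ColIdx d r n → 𝕜 := fun q => match q with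
    | .inl q' => if Bad q'.1.1 then
        Pi.single ((q'.1.1, ⟨Equiv.swap 0 (L q'.1.1) q'.1.2,
          z (Equiv.swap 0 (L q'.1.1) q'.1.2)⟩) : ColIdx d r n) 1
      else kcol p q'.1.1 q'.1.2
    | .inr _ => Pi.single ((i, ⟨Equiv.swap 0 (L i) kbar,
        o (Equiv.swap 0 (L i) kbar)⟩) : ColIdx d r n) 1
  -- the diagonal coordinates
  have hgood : ∀ i' : Fin r, ¬ Bad i' → ∀ k' : Fin d, ∃ j, p i' k' j ≠ 0 := by
    intro i' hb k'
    by_contra hc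
    push_neg at hc
    exact hb ⟨k', funext fun j => hc j⟩
  let c : ι → ColIdx d r n := fun q => match q with
    | .inl q' => if h : Bad q'.1.1 then
        (q'.1.1, ⟨Equiv.swap 0 (L q'.1.1) q'.1.2,
          z (Equiv.swap 0 (L q'.1.1) q'.1.2)⟩)
      else (q'.1.1, ⟨q'.1.2, (hgood q'.1.1 h q'.1.2).choose⟩)
    | .inr _ => (i, ⟨Equiv.swap 0 (L i) kbar, o (Equiv.swap 0 (L i) kbar)⟩)
  -- all family members lie in the kernel
  have hmem : ∀ q, (terracini p).mulVec (v q) = 0 := by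
    rintro (⟨⟨i', k'⟩, hk'⟩ | u)
    · by_cases hb : Bad i'
      · simp only [v, if_pos hb]
        exact single_mem_ker p (hL i' hb) (hswap (L i') k' hk') _
      · simp only [v, if_neg hb]
        exact kcol_mem_ker p i' hk'
    · exact single_mem_ker p (hL i hBadi) (hswap (L i) kbar hkbar) _
  -- linear independence
  have hdiag : ∀ q, v q (c q) ≠ 0 := by
    rintro (⟨⟨i', k'⟩, hk'⟩ | u)
    · by_cases hb : Bad i'
      · simp only [v, c, if_pos hb, dif_pos hb, Pi.single_apply, if_pos rfl]
        exact one_ne_zero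
      · simp only [v, c, if_neg hb, dif_neg hb, kcol, if_pos rfl]
        rw [kvec_self p i' hk']
        exact neg_ne_zero.mpr (hgood i' hb k').choose_spec
    · simp only [v, c, Pi.single_apply, if_pos rfl]
      exact one_ne_zero
  have hoff : ∀ q q', q' ≠ q → v q' (c q) = 0 := by
    rintro (⟨⟨i1, k1⟩, hk1⟩ | u1) (⟨⟨i2, k2⟩, hk2⟩ | u2) hne
    · -- q = inl, q' = inl
      have hpair : (i2, k2) ≠ (i1, k1) := fun h =>
        hne (congrArg Sum.inl (Subtype.ext h))
      by_cases hb1 : Bad i1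
      · simp only [c, dif_pos hb1]
        by_cases hb2 : Bad i2
        · simp only [v, if_pos hb2, Pi.single_apply]
          rw [if_neg]
          apply colidx_ne
          by_cases hii : i1 = i2
          · subst hii
            have hkk : k1 ≠ k2 := fun h => hpair (by rw [h])
            exact Or.inr (Or.inl ((Equiv.swap 0 (L i1)).injective.ne hkk))
          · exact Or.inl hii
        · simp only [v, if_neg hb2, kcol]
          rw [if_neg]
          intro h
          apply hb2
          rw [← show i1 = i2 from h]
          exact hb1
      · simp only [c, dif_neg hb1]
        by_cases hb2 : Bad i2
        · simp only [v, if_pos hb2, Pi.single_apply]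
          rw [if_neg]
          apply colidx_ne
          left
          intro h
          apply hb1
          rw [show i1 = i2 from h]
          exact hb2
        · simp only [v, if_neg hb2, kcol]
          by_cases hii : i1 = i2
          · subst hii
            rw [if_pos rfl]
            have hkk : k1 ≠ k2 := fun h => hpair (by rw [h])
            exact kvec_other p i1 k2 hk1 hkk _
          · rw [if_neg hii]
    · -- q = inl, q' = inr
      simp only [v, c, Pi.single_apply]
      by_cases hb1 : Bad i1
      · simp only [dif_pos hb1]
        rw [if_neg]
        apply colidx_ne
        by_cases hii : i1 = i
        · subst hii
          by_cases hmm : Equiv.swap 0 (L i1) k1 = Equiv.swap 0 (L i1) kbar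
          · right; right
            simp [z, o]
          · exact Or.inr (Or.inl hmm)
        · exact Or.inl hii
      · simp only [dif_neg hb1]
        rw [if_neg]
        apply colidx_ne
        left
        intro h
        apply hb1
        rw [show i1 = i from h]
        exact hBadi
    · -- q = inr, q' = inl
      simp only [v, c]
      by_cases hb2 : Bad i2
      · simp only [if_pos hb2, Pi.single_apply]
        rw [if_neg]
        apply colidx_ne
        by_cases hii : i = i2
        · subst hii
          by_cases hmm : Equiv.swap 0 (L i) kbar = Equiv.swap 0 (L i) k2
          · right; right
            simp [z, o]
          · exact Or.inr (Or.inl hmm)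
        · exact Or.inl hii
      · simp only [if_neg hb2, kcol]
        rw [if_neg]
        intro h
        exact hb2 (by rw [h] at hBadi; exact hBadi)
    · exact absurd rfl hne
  have li : LinearIndependent 𝕜 v := li_of_diag v c hdiag hoff
  -- embed into the kernel
  let K := LinearMap.ker (terracini p).mulVecLin
  have hmemK : ∀ q, v q ∈ K := fun q => LinearMap.mem_ker.mpr (by
    rw [Matrix.mulVecLin_apply]; exact hmem q)
  let v' : ι → K := fun q => ⟨v q, hmemK q⟩
  have li' : LinearIndependent 𝕜 v' :=
    LinearIndependent.of_comp K.subtype li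
  have hcard_le : Fintype.card ι ≤ Module.finrank 𝕜 K :=
    li'.fintype_card_le_finrank
  have hcard : Fintype.card ι = r * (d - 1) + 1 := by
    rw [Fintype.card_sum, card_nz, Fintype.card_unit]
  rw [hcard, ker_finrank_eq hd hn p hrank] at hcard_le
  exact Nat.not_succ_le_self _ hcard_le

/-- if Terracini's matrix has rank `r(Σ+1)`, then the `r(d−1)` vectors
`k_i^{(k)} ⊗ e_i` form a basis of its kernel; in particular `dim ker T_p = r(d−1)`. -/
theorem terracini_kernel_basis [NeZero d]
    (hd : 2 ≤ d) (hn : ∀ k, 2 ≤ n k) (hr : 1 ≤ r)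
    (p : Vecr 𝕜 d r n)
    (hrank : (terracini p).rank = r * ((∑ k, (n k - 1)) + 1)) :
    LinearIndependent 𝕜
      (fun q : {q : Fin r × Fin d // q.2 ≠ 0} => kcol p q.1.1 q.1.2)
    ∧ Submodule.span 𝕜
        (Set.range (fun q : {q : Fin r × Fin d // q.2 ≠ 0} => kcol p q.1.1 q.1.2))
        = LinearMap.ker (terracini p).mulVecLin
    ∧ Module.finrank 𝕜 (LinearMap.ker (terracini p).mulVecLin) = r * (d - 1) := by
  classical
  have hnz : ∀ (i : Fin r) (k : Fin d), k ≠ 0 → p i k ≠ 0 :=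
    fun i k hk => nz_of_rank hd hn p hrank i k hk
  have hex : ∀ q : {q : Fin r × Fin d // q.2 ≠ 0}, ∃ j, p q.1.1 q.1.2 j ≠ 0 := by
    intro q
    by_contra hc
    push_neg at hc
    exact hnz q.1.1 q.1.2 q.2 (funext fun j => hc j)
  have li : LinearIndependent 𝕜
      (fun q : {q : Fin r × Fin d // q.2 ≠ 0} => kcol p q.1.1 q.1.2) := by
    apply li_of_diag _ (fun q => ((q.1.1, ⟨q.1.2, (hex q).choose⟩) : ColIdx d r n))
    · intro q
      simp only [kcol, if_pos rfl]
      rw [kvec_self p q.1.1 q.2]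
      exact neg_ne_zero.mpr (hex q).choose_spec
    · rintro ⟨⟨i1, k1⟩, hk1⟩ ⟨⟨i2, k2⟩, hk2⟩ hne
      have hpair : (i2, k2) ≠ (i1, k1) := fun h => hne (Subtype.ext h)
      simp only [kcol]
      by_cases hii : i1 = i2
      · subst hii
        rw [if_pos rfl]
        have hkk : k1 ≠ k2 := fun h => hpair (by rw [h])
        exact kvec_other p i1 k2 hk1 hkk _
      · rw [if_neg hii]
  have hle : Submodule.span 𝕜
      (Set.range (fun q : {q : Fin r × Fin d // q.2 ≠ 0} => kcol p q.1.1 q.1.2))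
      ≤ LinearMap.ker (terracini p).mulVecLin := by
    rw [Submodule.span_le]
    rintro _ ⟨q, rfl⟩
    exact LinearMap.mem_ker.mpr (by
      rw [Matrix.mulVecLin_apply]; exact kcol_mem_ker p q.1.1 q.2)
  have hker := ker_finrank_eq hd hn p hrank
  have hspan : Module.finrank 𝕜 (Submodule.span 𝕜
      (Set.range (fun q : {q : Fin r × Fin d // q.2 ≠ 0} => kcol p q.1.1 q.1.2)))
      = r * (d - 1) := by
    rw [finrank_span_eq_card li, card_nz]
  exact ⟨li, Submodule.eq_of_le_of_finrank_eq hle (by rw [hspan, hker]), hker⟩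

end TensorCond
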